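/- Let a, b, c ∈ ℂ with Re(c − a − b) > 0 and with c, c − a, c − b not nonpositive integers. For n ∈ ℕ set F(n,k) := [(a)_k (b)_k / ((c+n)_k · k!)] · Γ(c+n−a) Γ(c+n−b) / (Γ(c+n) Γ(c+n−a−b)). Then for every n ∈ ℕ the series ∑_{k=0}^∞ F(n,k) converges absolutely and its sum is independent of n, i.e. ∑_{k=0}^∞ F(n,k) = ∑_{k=0}^∞ F(0,k) for all n ∈ ℕ. -/

import Mathlib

open Complex Filter Topology

/-- Pochhammer symbol `(a)_k = a (a+1) ⋯ (a+k-1)`. -/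
noncomputable def poch (a : ℂ) (k : ℕ) : ℂ := ∏ i ∈ Finset.range k, (a + i)

/-- The normalized summand `F(n,k)` for Gauss' summation. -/
noncomputable def Fg (a b c : ℂ) (n k : ℕ) : ℂ :=
  poch a k * poch b k / (poch (c + n) k * (Nat.factorial k : ℂ)) *
    (Complex.Gamma (c + n - a) * Complex.Gamma (c + n - b) /
      (Complex.Gamma (c + n) * Complex.Gamma (c + n - a - b)))

/-- The unnormalized summand. -/
noncomputable def tg (a b s : ℂ) (k : ℕ) : ℂ :=
  poch a k * poch b k / (poch s k * (Nat.factorial k : ℂ))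

/-- The Gamma-quotient normalization factor. -/
noncomputable def Rg (a b c : ℂ) (n : ℕ) : ℂ :=
  Complex.Gamma (c + n - a) * Complex.Gamma (c + n - b) /
    (Complex.Gamma (c + n) * Complex.Gamma (c + n - a - b))

lemma Fg_eq (a b c : ℂ) (n k : ℕ) : Fg a b c n k = tg a b (c + n) k * Rg a b c n := rfl

lemma poch_succ (s : ℂ) (k : ℕ) : poch s (k+1) = poch s k * (s + k) :=
  Finset.prod_range_succ _ _

lemma poch_succ' (s : ℂ) (k : ℕ) : poch s (k+1) = s * poch (s+1) k := by
  rw [poch, Finset.prod_range_succ']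
  rw [mul_comm]
  congr 1
  · push_cast; ring
  · exact Finset.prod_congr rfl fun i _ => by push_cast; ring

lemma poch_ne_zero {s : ℂ} (hs : ∀ m : ℕ, s + m ≠ 0) (k : ℕ) : poch s k ≠ 0 :=
  Finset.prod_ne_zero_iff.mpr fun i _ => hs i

lemma poch_eq_zero {a : ℂ} {m : ℕ} (hm : a + m = 0) {k : ℕ} (hk : m < k) : poch a k = 0 :=
  Finset.prod_eq_zero (Finset.mem_range.mpr hk) hm

lemma gammaSeq_eq (s : ℂ) (k : ℕ) :
    Complex.GammaSeq s k = (k : ℂ) ^ s * (Nat.factorial k : ℂ) / poch s (k+1) := rfl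

lemma key_eq (a b s : ℂ) (ha : ∀ m : ℕ, a + m ≠ 0) (hb : ∀ m : ℕ, b + m ≠ 0)
    (hs : ∀ m : ℕ, s + m ≠ 0) {k : ℕ} (hk : 1 ≤ k) :
    ((k:ℂ)+1) * tg a b s (k+1)
      = (k:ℂ) ^ (a+b-s) * (Complex.GammaSeq s k / (Complex.GammaSeq a k * Complex.GammaSeq b k)) := by
  have hk0 : (k:ℂ) ≠ 0 := Nat.cast_ne_zero.mpr (by omega)
  have hfa : ((Nat.factorial k : ℕ) : ℂ) ≠ 0 := Nat.cast_ne_zero.mpr k.factorial_ne_zero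
  have hpa := poch_ne_zero ha (k+1)
  have hpb := poch_ne_zero hb (k+1)
  have hps := poch_ne_zero hs (k+1)
  have hca : (k:ℂ) ^ a ≠ 0 := by
    intro h
    exact hk0 (Complex.cpow_eq_zero_iff _ _ |>.mp h).1
  have hcb : (k:ℂ) ^ b ≠ 0 := fun h => hk0 (Complex.cpow_eq_zero_iff _ _ |>.mp h).1
  have hcs : (k:ℂ) ^ s ≠ 0 := fun h => hk0 (Complex.cpow_eq_zero_iff _ _ |>.mp h).1
  have hpow : (k:ℂ) ^ (a+b-s) = (k:ℂ)^a * (k:ℂ)^b / (k:ℂ)^s := by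
    rw [Complex.cpow_sub _ _ hk0, Complex.cpow_add _ _ hk0]
  have hk1 : (k:ℂ) + 1 ≠ 0 := by
    have : ((k+1 : ℕ) : ℂ) ≠ 0 := Nat.cast_ne_zero.mpr (Nat.succ_ne_zero k)
    push_cast at this; exact this
  rw [hpow, tg, gammaSeq_eq, gammaSeq_eq, gammaSeq_eq]
  rw [Nat.factorial_succ]
  push_cast
  field_simp

lemma tg_asymp (a b s : ℂ) (hs : ∀ m : ℕ, s + m ≠ 0) (hre : 0 < (s - a - b).re) :
    Summable (fun k : ℕ => ‖tg a b s k‖) ∧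
      Tendsto (fun k : ℕ => (k : ℂ) * tg a b s k) atTop (𝓝 0) := by
  by_cases hzero : (∃ m : ℕ, a + m = 0) ∨ (∃ m : ℕ, b + m = 0)
  · -- terminating case: the summand is eventually zero
    have hz : ∃ m : ℕ, ∀ k, m < k → tg a b s k = 0 := by
      obtain ⟨m, hm⟩ | ⟨m, hm⟩ := hzero
      · exact ⟨m, fun k hk => by rw [tg, poch_eq_zero hm hk, zero_mul, zero_div]⟩
      · exact ⟨m, fun k hk => by rw [tg, poch_eq_zero hm hk, mul_zero, zero_div]⟩
    obtain ⟨m, hm⟩ := hz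
    constructor
    · apply summable_of_ne_finset_zero (s := Finset.range (m+1))
      intro k hk
      rw [hm k (by simpa using hk), norm_zero]
    · apply Tendsto.congr' _ tendsto_const_nhds
      filter_upwards [eventually_gt_atTop m] with k hk
      rw [hm k hk, mul_zero]
  · push_neg at hzero
    obtain ⟨ha, hb⟩ := hzero
    have ha' : ∀ m : ℕ, a ≠ -m := fun m h => ha m (by rw [h]; ring)
    have hb' : ∀ m : ℕ, b ≠ -m := fun m h => hb m (by rw [h]; ring)
    set ratio : ℕ → ℂ := fun k => Complex.GammaSeq s k / (Complex.GammaSeq a k * Complex.GammaSeq b k) with hratio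
    have hlim : Tendsto ratio atTop (𝓝 (Complex.Gamma s / (Complex.Gamma a * Complex.Gamma b))) :=
      (Complex.GammaSeq_tendsto_Gamma s).div
        ((Complex.GammaSeq_tendsto_Gamma a).mul (Complex.GammaSeq_tendsto_Gamma b))
        (mul_ne_zero (Complex.Gamma_ne_zero ha') (Complex.Gamma_ne_zero hb'))
    obtain ⟨M, hM⟩ := (hlim.norm).bddAbove_range
    set M' : ℝ := max M 0 with hM'def
    have hM' : ∀ k, ‖ratio k‖ ≤ M' := fun k =>
      le_trans (hM ⟨k, rfl⟩) (le_max_left M 0)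
    have hM'0 : (0:ℝ) ≤ M' := le_max_right M 0
    set ε : ℝ := (s - a - b).re with hε
    have hre2 : (a + b - s).re = -ε := by simp [hε, Complex.sub_re, Complex.add_re]; ring
    have hnorm : ∀ k : ℕ, 1 ≤ k →
        ‖((k:ℂ)+1) * tg a b s (k+1)‖ = (k:ℝ)^(-ε) * ‖ratio k‖ := by
      intro k hk
      rw [key_eq a b s ha hb hs hk, norm_mul, Complex.norm_natCast_cpow_of_pos (by omega), hre2]
    have hbound : ∀ k : ℕ, 1 ≤ k → ‖tg a b s (k+1)‖ ≤ M' * (k:ℝ)^(-(1+ε)) := by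
      intro n hn
      have hn0 : (0:ℝ) < n := by exact_mod_cast hn
      have e1 : ((n:ℝ)+1) * ‖tg a b s (n+1)‖ = (n:ℝ)^(-ε) * ‖ratio n‖ := by
        rw [← hnorm n hn, norm_mul]
        congr 1
        rw [show ((n:ℂ)+1) = ((n+1:ℕ):ℂ) by push_cast; ring, Complex.norm_natCast]
        push_cast; ring
      have e2 : ‖tg a b s (n+1)‖ = (n:ℝ)^(-ε) * ‖ratio n‖ / ((n:ℝ)+1) := by
        rw [← e1]; field_simp
      rw [e2]
      calc (n:ℝ)^(-ε) * ‖ratio n‖ / ((n:ℝ)+1)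
          ≤ (n:ℝ)^(-ε) * M' / (n:ℝ) := by
            apply div_le_div₀ (by positivity)
              (mul_le_mul_of_nonneg_left (hM' n) (Real.rpow_nonneg hn0.le _)) hn0 (by linarith)
        _ = M' * (n:ℝ)^(-(1+ε)) := by
            rw [show -(1+ε) = -ε + (-1) by ring, Real.rpow_add hn0, Real.rpow_neg_one]
            field_simp
    constructor
    · rw [← summable_nat_add_iff 2]
      have hcomp : Summable (fun k : ℕ => M' * (((k+1:ℕ)):ℝ)^(-(1+ε))) := by
        apply Summable.mul_left
        exact (summable_nat_add_iff (f := fun n : ℕ => ((n:ℝ))^(-(1+ε))) 1).mpr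
          (Real.summable_nat_rpow.mpr (by linarith))
      apply Summable.of_nonneg_of_le (fun k => norm_nonneg _) _ hcomp
      intro k
      have := hbound (k+1) (by omega)
      convert this using 3 <;> push_cast <;> ring
    · rw [← tendsto_add_atTop_iff_nat 1]
      have hg : Tendsto (fun k : ℕ => M' * (k:ℝ)^(-ε)) atTop (𝓝 0) := by
        rw [show (0:ℝ) = M' * 0 by ring]
        exact ((tendsto_rpow_neg_atTop hre).comp tendsto_natCast_atTop_atTop).const_mul M'
      apply squeeze_zero_norm' _ hg
      filter_upwards [eventually_ge_atTop 1] with k hk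
      have e : ((k+1:ℕ):ℂ) * tg a b s (k+1) = ((k:ℂ)+1) * tg a b s (k+1) := by push_cast; ring
      rw [e, hnorm k hk, mul_comm M' ((k:ℝ)^(-ε))]
      exact mul_le_mul_of_nonneg_left (hM' k) (Real.rpow_nonneg (by positivity) _)

lemma termwise (a b s : ℂ) (hsk : ∀ m : ℕ, s + m ≠ 0) (k : ℕ) :
    (s - a - b) * tg a b s k - ((s-a)*(s-b)/s) * tg a b (s+1) k
      = (k:ℂ) * tg a b s k - ((k:ℂ)+1) * tg a b s (k+1) := by
  have hs0 : s ≠ 0 := by simpa using hsk 0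
  have hsk' : s + (k:ℂ) ≠ 0 := hsk k
  have hC : poch s k ≠ 0 := poch_ne_zero hsk k
  have hC1 : poch (s+1) k ≠ 0 :=
    poch_ne_zero (fun m h => hsk (m+1) (by push_cast; linear_combination h)) k
  have hfa : ((Nat.factorial k : ℕ) : ℂ) ≠ 0 := Nat.cast_ne_zero.mpr k.factorial_ne_zero
  have hk1 : (k:ℂ) + 1 ≠ 0 := by
    have : ((k+1 : ℕ) : ℂ) ≠ 0 := Nat.cast_ne_zero.mpr (Nat.succ_ne_zero k)
    push_cast at this; exact this
  have heq : poch (s+1) k = poch s k * (s + k) / s := by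
    rw [eq_div_iff hs0]
    linear_combination (poch_succ' s k).symm.trans (poch_succ s k)
  have htg1 : tg a b (s+1) k = poch a k * poch b k * s /
      (poch s k * (s+(k:ℂ)) * (Nat.factorial k : ℂ)) := by
    rw [tg, heq]
    field_simp
  have htg2 : tg a b s (k+1) = poch a k * (a+(k:ℂ)) * (poch b k * (b+(k:ℂ))) /
      (poch s k * (s+(k:ℂ)) * (((k:ℂ)+1) * (Nat.factorial k : ℂ))) := by
    rw [tg, poch_succ, poch_succ, poch_succ, Nat.factorial_succ]
    push_cast
    ring
  rw [htg1, htg2, tg]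
  set w := s + (k:ℂ) with hw
  clear_value w
  have hw0 : w ≠ 0 := hsk'
  field_simp
  rw [hw]
  ring

theorem gauss_sum_independent_of_n (a b c : ℂ) (hre : 0 < (c - a - b).re)
    (hc : ∀ m : ℕ, c ≠ -(m : ℂ)) (hca : ∀ m : ℕ, c - a ≠ -(m : ℂ))
    (hcb : ∀ m : ℕ, c - b ≠ -(m : ℂ)) :
    (∀ n : ℕ, Summable fun k : ℕ => ‖Fg a b c n k‖) ∧
    (∀ n : ℕ, ∑' k : ℕ, Fg a b c n k = ∑' k : ℕ, Fg a b c 0 k) := by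
  have hshift : ∀ n : ℕ, ∀ m : ℕ, (c + (n:ℂ)) + m ≠ 0 := by
    intro n m h
    apply hc (n + m)
    push_cast
    linear_combination h
  have hrepos : ∀ n : ℕ, 0 < (c + (n:ℂ) - a - b).re := by
    intro n
    have h1 : (c + (n:ℂ) - a - b).re = (c - a - b).re + n := by
      simp [Complex.add_re, Complex.sub_re]
      ring
    rw [h1]
    have : (0:ℝ) ≤ n := Nat.cast_nonneg n
    linarith
  have hA := fun n : ℕ => tg_asymp a b (c + n) (hshift n) (hrepos n)
  have hsumF : ∀ n : ℕ, Summable fun k : ℕ => ‖Fg a b c n k‖ := by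
    intro n
    apply Summable.congr ((hA n).1.mul_right ‖Rg a b c n‖)
    intro k
    rw [Fg_eq, norm_mul]
  refine ⟨hsumF, ?_⟩
  have step : ∀ n : ℕ, ∑' k : ℕ, Fg a b c (n+1) k = ∑' k : ℕ, Fg a b c n k := by
    intro n
    have hsk := hshift n
    have hs0 : (c + (n:ℂ)) ≠ 0 := by simpa using hsk 0
    have hsa : (c + (n:ℂ)) - a ≠ 0 := fun h => hca n (by linear_combination h)
    have hsb : (c + (n:ℂ)) - b ≠ 0 := fun h => hcb n (by linear_combination h)
    have hsab : (c + (n:ℂ)) - a - b ≠ 0 := by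
      intro h
      have h2 : ((c + (n:ℂ)) - a - b).re = 0 := by rw [h]; simp
      have := hrepos n
      rw [show c + (n:ℂ) - a - b = (c + (n:ℂ)) - a - b by ring] at this
      linarith
    have hΓs : Complex.Gamma (c + (n:ℂ)) ≠ 0 :=
      Complex.Gamma_ne_zero (fun m h => hshift n m (by rw [h]; ring))
    have hΓsab : Complex.Gamma ((c + (n:ℂ)) - a - b) ≠ 0 :=
      Complex.Gamma_ne_zero_of_re_pos (by
        rw [show (c + (n:ℂ)) - a - b = c + (n:ℂ) - a - b by ring]; exact hrepos n)
    have hcast : (c + ((n+1:ℕ):ℂ)) = (c + (n:ℂ)) + 1 := by push_cast; ring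
    set u : ℕ → ℂ := tg a b (c + (n:ℂ)) with hu
    set v : ℕ → ℂ := tg a b ((c + (n:ℂ)) + 1) with hv
    have Su : Summable u := (hA n).1.of_norm
    have Sv : Summable v := by
      have := (hA (n+1)).1.of_norm
      rwa [hcast] at this
    have hid : ∀ k : ℕ,
        ((c + (n:ℂ)) - a - b) * u k - (((c + (n:ℂ))-a)*((c + (n:ℂ))-b)/(c + (n:ℂ))) * v k
          = (k:ℂ) * u k - ((k:ℂ)+1) * u (k+1) := termwise a b _ hsk
    have SL : Summable (fun k : ℕ =>
        ((c + (n:ℂ)) - a - b) * u k - (((c + (n:ℂ))-a)*((c + (n:ℂ))-b)/(c + (n:ℂ))) * v k) :=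
      (Su.mul_left _).sub (Sv.mul_left _)
    have SR : Summable (fun k : ℕ => (k:ℂ) * u k - ((k:ℂ)+1) * u (k+1)) := SL.congr hid
    have htel : ∑' k : ℕ, ((k:ℂ) * u k - ((k:ℂ)+1) * u (k+1)) = 0 := by
      have h1 := SR.hasSum.tendsto_sum_nat
      have h2 : Tendsto (fun N : ℕ => ∑ k ∈ Finset.range N, ((k:ℂ) * u k - ((k:ℂ)+1) * u (k+1)))
          atTop (𝓝 0) := by
        have hps : ∀ N : ℕ, ∑ k ∈ Finset.range N, ((k:ℂ) * u k - ((k:ℂ)+1) * u (k+1))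
            = -((N:ℂ) * u N) := by
          intro N
          calc ∑ k ∈ Finset.range N, ((k:ℂ) * u k - ((k:ℂ)+1) * u (k+1))
              = ∑ k ∈ Finset.range N,
                  ((fun i : ℕ => (i:ℂ) * u i) k - (fun i : ℕ => (i:ℂ) * u i) (k+1)) :=
                Finset.sum_congr rfl (fun k _ => by push_cast; ring)
            _ = (fun i : ℕ => (i:ℂ) * u i) 0 - (fun i : ℕ => (i:ℂ) * u i) N :=
                Finset.sum_range_sub' _ N
            _ = -((N:ℂ) * u N) := by simp
        apply Tendsto.congr (fun N => (hps N).symm)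
        simpa using ((hA n).2).neg
      exact tendsto_nhds_unique h1 h2
    have hkey : ((c + (n:ℂ)) - a - b) * (∑' k, u k)
        = (((c + (n:ℂ))-a)*((c + (n:ℂ))-b)/(c + (n:ℂ))) * (∑' k, v k) := by
      have e : ((c + (n:ℂ)) - a - b) * (∑' k, u k)
          - (((c + (n:ℂ))-a)*((c + (n:ℂ))-b)/(c + (n:ℂ))) * (∑' k, v k)
          = ∑' k : ℕ, (((c + (n:ℂ)) - a - b) * u k
            - (((c + (n:ℂ))-a)*((c + (n:ℂ))-b)/(c + (n:ℂ))) * v k) := by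
        rw [Summable.tsum_sub (Su.mul_left _) (Sv.mul_left _), tsum_mul_left, tsum_mul_left]
      have e2 : (∑' k : ℕ, (((c + (n:ℂ)) - a - b) * u k
          - (((c + (n:ℂ))-a)*((c + (n:ℂ))-b)/(c + (n:ℂ))) * v k)) = 0 := by
        rw [tsum_congr hid]
        exact htel
      exact sub_eq_zero.mp (e.trans e2)
    have hkey2 : ((c + (n:ℂ)) - a - b) * (∑' k, u k) * (c + (n:ℂ))
        = ((c + (n:ℂ))-a)*((c + (n:ℂ))-b) * (∑' k, v k) := by
      rw [hkey]
      field_simp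
    have ht : ∀ m : ℕ, ∑' k : ℕ, Fg a b c m k = (∑' k : ℕ, tg a b (c + (m:ℂ)) k) * Rg a b c m := by
      intro m
      simp only [Fg_eq]
      exact tsum_mul_right
    have hR : Rg a b c (n+1)
        = (((c + (n:ℂ))-a) * ((c + (n:ℂ))-b) / ((c + (n:ℂ)) * ((c + (n:ℂ))-a-b))) * Rg a b c n := by
      rw [Rg, Rg]
      rw [show c + ((n+1:ℕ):ℂ) - a - b = ((c + (n:ℂ)) - a - b) + 1 by push_cast; ring,
          show c + ((n+1:ℕ):ℂ) - a = ((c + (n:ℂ)) - a) + 1 by push_cast; ring,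
          show c + ((n+1:ℕ):ℂ) - b = ((c + (n:ℂ)) - b) + 1 by push_cast; ring,
          show (c + ((n+1:ℕ):ℂ)) = (c + (n:ℂ)) + 1 by push_cast; ring,
          Complex.Gamma_add_one _ hsa, Complex.Gamma_add_one _ hsb,
          Complex.Gamma_add_one _ hs0, Complex.Gamma_add_one _ hsab]
      field_simp
    have hfin : (∑' k, v k) * (((c + (n:ℂ))-a)*((c + (n:ℂ))-b)/((c + (n:ℂ))*((c + (n:ℂ))-a-b)))
        = ∑' k, u k := by
      field_simp
      linear_combination -hkey2
    have hv' : (∑' k : ℕ, tg a b (c + ((n+1:ℕ):ℂ)) k) = ∑' k, v k := by rw [hcast]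
    rw [ht (n+1), ht n, hv', hR, ← mul_assoc, hfin]
  intro n
  induction n with
  | zero => rfl
  | succ n ih => rw [step n, ih]
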